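/- Let (E,T,S,e) be a conditionally ergodic conditional expectation preserving system with T strictly positive and S surjective, assume every upward directed subset D of E₊ for which {Tf : f ∈ D} is order bounded in E has a supremum in E, and assume (S,e) is aperiodic. Then for every integer n ≥ 1 and every real ε > 0 there exists a component q of e such that q, Sq, …, S^{n-1}q are pairwise disjoint and T(e − ⋁_{i=0}^{n-1} S^i q) ≤ ε·e. -/

import Mathlib

noncomputable section

open Function Set

variable {E : Type*}

/-- `e` is a weak order unit: `e > 0` and `e ⊓ |x| = 0` implies `x = 0`. -/
def WeakOrderUnit [Lattice E] [AddCommGroup E] (e : E) : Prop :=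
  0 < e ∧ ∀ x : E, e ⊓ (x ⊔ -x) = 0 → x = 0

/-- `p` is a component of `q ∈ E₊`: `0 ≤ p ≤ q` and `(q - p) ⊓ p = 0`. -/
def IsComponent [Lattice E] [AddCommGroup E] (q p : E) : Prop :=
  0 ≤ p ∧ p ≤ q ∧ (q - p) ⊓ p = 0

/-- `partialSup f n = ⋁_{j < n} f j`, with the empty supremum equal to `0`. -/
def partialSup [Lattice E] [Zero E] (f : ℕ → E) : ℕ → E
  | 0 => 0
  | n + 1 => partialSup f n ⊔ f n

/-- The band projection of `e` onto the band generated by `g`: `P_g e = ⨆_{m ∈ ℕ} (e ⊓ m•g)`. -/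
def bandProjApp [ConditionallyCompleteLattice E] [AddCommGroup E] (g e : E) : E :=
  ⨆ m : ℕ, e ⊓ m • g

/-- `qComp Sinv e p k = p ⊓ S⁻ᵏp ⊓ (e - ⋁_{j=1}^{k-1} S⁻ʲp)` (empty supremum is `0`). -/
def qComp [Lattice E] [AddCommGroup E] (Sinv : E → E) (e p : E) (k : ℕ) : E :=
  p ⊓ Sinv^[k] p ⊓ (e - partialSup (fun j => Sinv^[j + 1] p) (k - 1))

/-- `(E,T,S,e)` is a conditional expectation preserving system: `E` is a Dedekind complete
Riesz space (typeclass assumptions), `e` is a weak order unit, `T` is a strictly positive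
conditional expectation operator with `Te = e`, and `S` is an order-continuous Riesz
homomorphism with `Se = e` and `TS = T`. -/
structure IsCEPS [ConditionallyCompleteLattice E] [AddCommGroup E] [Module ℝ E]
    (T S : E →ₗ[ℝ] E) (e : E) : Prop where
  unit : WeakOrderUnit e
  T_pos : ∀ f : E, 0 ≤ f → 0 ≤ T f
  T_strictPos : ∀ f : E, 0 ≤ f → T f = 0 → f = 0
  T_proj : ∀ f : E, T (T f) = T f
  T_ordCont : ∀ D : Set E, D.Nonempty → DirectedOn (· ≥ ·) D → IsGLB D 0 →
    IsGLB ((⇑T) '' D) 0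
  T_range_sublattice : ∀ x ∈ Set.range T, ∀ y ∈ Set.range T, x ⊔ y ∈ Set.range T
  T_range_dedekind : ∀ D : Set E, D ⊆ Set.range T → D.Nonempty →
    (∃ b ∈ Set.range T, ∀ x ∈ D, x ≤ b) →
    ∃ s ∈ Set.range T, (∀ x ∈ D, x ≤ s) ∧ ∀ b ∈ Set.range T, (∀ x ∈ D, x ≤ b) → s ≤ b
  T_weakUnit : ∀ u : E, WeakOrderUnit u → WeakOrderUnit (T u)
  Te : T e = e
  S_hom : ∀ x y : E, S (x ⊔ y) = S x ⊔ S y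
  S_ordCont : ∀ D : Set E, D.Nonempty → DirectedOn (· ≥ ·) D → IsGLB D 0 →
    IsGLB ((⇑S) '' D) 0
  Se : S e = e
  TS : ∀ f : E, T (S f) = T f

/-- `E` is `T`-universally complete: every upward directed subset `D` of `E₊` for which
`T '' D` is order bounded in `E` has a supremum in `E`. -/
def TUnivComplete [ConditionallyCompleteLattice E] [AddCommGroup E] [Module ℝ E]
    (T : E →ₗ[ℝ] E) : Prop :=
  ∀ D : Set E, D.Nonempty → D ⊆ {x : E | 0 ≤ x} → DirectedOn (· ≤ ·) D →
    BddAbove ((⇑T) '' D) → BddBelow ((⇑T) '' D) → ∃ s : E, IsLUB D s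

/-- `(S, v)` is aperiodic (with `Sinv` the inverse of `S`): for every `N ∈ ℕ` and every
nonzero component `c` of `v` there exist `k ≥ N` and a component `u` of `c` with
`q(u,k) ≠ 0`. -/
def IsAperiodic [Lattice E] [AddCommGroup E] (Sinv : E → E) (e v : E) : Prop :=
  ∀ N : ℕ, ∀ c : E, IsComponent v c → c ≠ 0 →
    ∃ k : ℕ, N ≤ k ∧ ∃ u : E, IsComponent c u ∧ qComp Sinv e u k ≠ 0

/-- `(S, e)` is periodic (with `Sinv` the inverse of `S`): there is `N ∈ ℕ` such that
`q(c,k) = 0` for all `k ≥ N` and all components `c` of `e` with `0 ≠ c ≠ e`. -/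
def IsPeriodic [Lattice E] [AddCommGroup E] (Sinv : E → E) (e : E) : Prop :=
  ∃ N : ℕ, ∀ c : E, IsComponent e c → c ≠ 0 → c ≠ e → ∀ k : ℕ, N ≤ k → qComp Sinv e c k = 0


section LatGrp
variable {E : Type*} [Lattice E] [AddCommGroup E] [CovariantClass E E (· + ·) (· ≤ ·)]

private lemma kr_inf_sup_right (a b c : E) : (a ⊔ b) ⊓ c = (a ⊓ c) ⊔ (b ⊓ c) := by
  letI : DistribLattice E := AddCommGroup.toDistribLattice E
  exact inf_sup_right a b c

private lemma kr_sup_eq_add {x y : E} (h : x ⊓ y = 0) : x ⊔ y = x + y := by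
  have := inf_add_sup x y
  rw [h, zero_add] at this
  exact this

private lemma kr_inf_add_le {x y z : E} (hx : 0 ≤ x) (hy : 0 ≤ y) (hz : 0 ≤ z) :
    x ⊓ (y + z) ≤ x ⊓ y + x ⊓ z := by
  set a := x ⊓ (y + z) with ha
  have h1 : a - x ⊓ y ≤ z := by
    rw [sub_inf]
    refine sup_le (le_trans (sub_nonpos.2 inf_le_left) hz) ?_
    exact sub_le_iff_le_add'.2 inf_le_right
  have h2 : a - x ⊓ y ≤ x :=
    sub_le_iff_le_add'.2 (le_trans inf_le_left (le_add_of_nonneg_left (le_inf hx hy)))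
  exact sub_le_iff_le_add'.1 (le_inf h2 h1)

private lemma kr_add_inf_eq_zero {x y z : E} (hx : 0 ≤ x) (hy : 0 ≤ y) (hz : 0 ≤ z)
    (h1 : x ⊓ z = 0) (h2 : y ⊓ z = 0) : (x + y) ⊓ z = 0 := by
  have le1 : z ⊓ (x + y) ≤ z ⊓ x + z ⊓ y := kr_inf_add_le hz hx hy
  rw [inf_comm z x, inf_comm z y, h1, h2, add_zero] at le1
  rw [inf_comm] at le1
  exact le_antisymm le1 (le_inf (add_nonneg hx hy) hz)

private lemma kr_isLUB_inf {A : Set E} {s : E} (h : IsLUB A s) (a : E) :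
    IsLUB ((fun d => a ⊓ d) '' A) (a ⊓ s) := by
  constructor
  · rintro _ ⟨d, hd, rfl⟩
    exact inf_le_inf_left a (h.1 hd)
  · intro u hu
    have hs : s ≤ u + (a ⊔ s) - a := by
      apply h.2
      intro d hd
      have h3 : a ⊓ d ≤ u := hu ⟨d, hd, rfl⟩
      have h4 : a + d - (a ⊔ d) ≤ u := by
        have he := inf_add_sup a d
        calc a + d - (a ⊔ d) = a ⊓ d := by rw [← he]; abel
        _ ≤ u := h3
      have h5 : a ⊔ d ≤ a ⊔ s := sup_le le_sup_left ((h.1 hd).trans le_sup_right)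
      have h6 : a + d ≤ u + (a ⊔ d) := sub_le_iff_le_add.1 h4
      have h7 : a + d ≤ u + (a ⊔ s) := h6.trans (add_le_add (le_refl u) h5)
      calc d = a + d - a := by abel
      _ ≤ u + (a ⊔ s) - a := sub_le_sub_right h7 a
    have he := inf_add_sup a s
    have : a + s ≤ u + (a ⊔ s) := by
      have := add_le_add (le_refl a) hs
      calc a + s ≤ a + (u + (a ⊔ s) - a) := this
      _ = u + (a ⊔ s) := by abel
    calc a ⊓ s = a + s - (a ⊔ s) := by rw [← he]; abel
    _ ≤ u := sub_le_iff_le_add.2 this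
end LatGrp

section CCL
variable {E : Type*} [ConditionallyCompleteLattice E] [AddCommGroup E]
  [CovariantClass E E (· + ·) (· ≤ ·)]

private lemma kr_archimedean {z b : E} (hz : 0 ≤ z) (h : ∀ m : ℕ, m • z ≤ b) : z = 0 := by
  have hne : (Set.range fun m : ℕ => m • z).Nonempty := ⟨0 • z, ⟨0, rfl⟩⟩
  have hbdd : BddAbove (Set.range fun m : ℕ => m • z) := ⟨b, by rintro _ ⟨m, rfl⟩; exact h m⟩
  have hlub : IsLUB (Set.range fun m : ℕ => m • z) (sSup (Set.range fun m : ℕ => m • z)) :=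
    isLUB_csSup hne hbdd
  set s := sSup (Set.range fun m : ℕ => m • z)
  have h2 : ∀ m : ℕ, m • z ≤ s - z := by
    intro m
    have h1 : (m + 1) • z ≤ s := hlub.1 ⟨m + 1, rfl⟩
    rw [succ_nsmul] at h1
    exact le_sub_iff_add_le.2 h1
  have h3 : s ≤ s - z := hlub.2 (by rintro _ ⟨m, rfl⟩; exact h2 m)
  have h4 : s + z ≤ s := le_sub_iff_add_le.1 h3
  have h5 : s + z ≤ s + 0 := by simpa using h4
  exact le_antisymm (le_of_add_le_add_left h5) hz
end CCL

set_option linter.unusedSectionVars false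
set_option linter.unusedVariables false
section Main
variable {E : Type*} [ConditionallyCompleteLattice E] [AddCommGroup E]
    [Module ℝ E] [CovariantClass E E (· + ·) (· ≤ ·)] [PosSMulMono ℝ E]
    {T S : E →ₗ[ℝ] E} {e : E}

private lemma kr_S_mono (hC : IsCEPS T S e) : Monotone ⇑S := by
  intro x y hxy
  have h : S y = S x ⊔ S y := by rw [← hC.S_hom, sup_eq_right.2 hxy]
  rw [h]; exact le_sup_left

private lemma kr_S_inf (hC : IsCEPS T S e) (x y : E) : S (x ⊓ y) = S x ⊓ S y := by
  have h1 : x ⊓ y = x + y - (x ⊔ y) := by rw [← inf_add_sup x y]; abel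
  have h2 := inf_add_sup (S x) (S y)
  rw [h1, map_sub, map_add, hC.S_hom]
  rw [← h2]; abel

private lemma kr_T_mono (hC : IsCEPS T S e) : Monotone ⇑T := by
  intro x y hxy
  have := hC.T_pos (y - x) (sub_nonneg.2 hxy)
  rw [map_sub] at this
  exact sub_nonneg.1 this

private lemma kr_S_inj (hC : IsCEPS T S e) : Function.Injective ⇑S := by
  intro f g hfg
  have hz : S (f - g) = 0 := by rw [map_sub, hfg, sub_self]
  set h := f - g with hh
  have hp : S (h ⊔ 0) = 0 := by rw [hC.S_hom, hz, map_zero, sup_idem]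
  have hn : S ((-h) ⊔ 0) = 0 := by rw [hC.S_hom, map_neg, hz, neg_zero, map_zero, sup_idem]
  have hp0 : h ⊔ 0 = 0 := hC.T_strictPos _ le_sup_right (by rw [← hC.TS, hp, map_zero])
  have hn0 : (-h) ⊔ 0 = 0 := hC.T_strictPos _ le_sup_right (by rw [← hC.TS, hn, map_zero])
  have h1 : h ≤ 0 := le_sup_left.trans hp0.le
  have h2 : -h ≤ 0 := le_sup_left.trans hn0.le
  have : h = 0 := le_antisymm h1 (neg_nonpos.1 h2)
  rw [hh] at this
  exact sub_eq_zero.1 this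

variable (hS : Function.Surjective ⇑S)

private lemma kr_SSinv (x : E) : S (Function.surjInv hS x) = x := Function.surjInv_eq hS x

private lemma kr_SinvS (hC : IsCEPS T S e) (x : E) : Function.surjInv hS (S x) = x :=
  kr_S_inj hC (by rw [kr_SSinv])

private lemma kr_SkSinvk (hC : IsCEPS T S e) (k : ℕ) (x : E) :
    (⇑S)^[k] ((Function.surjInv hS)^[k] x) = x := by
  induction k generalizing x with
  | zero => rfl
  | succ m ih =>
    rw [Function.iterate_succ_apply', Function.iterate_succ_apply]
    rw [ih, kr_SSinv]

private lemma kr_SinvkSk (hC : IsCEPS T S e) (k : ℕ) (x : E) :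
    (Function.surjInv hS)^[k] ((⇑S)^[k] x) = x := by
  induction k generalizing x with
  | zero => rfl
  | succ m ih =>
    rw [Function.iterate_succ_apply, Function.iterate_succ_apply']
    rw [kr_SinvS hS hC, ih]

private lemma kr_Sk_mono (hC : IsCEPS T S e) (k : ℕ) : Monotone ((⇑S)^[k]) :=
  Monotone.iterate (kr_S_mono hC) k

private lemma kr_Sinv_sup (hC : IsCEPS T S e) (x y : E) :
    Function.surjInv hS (x ⊔ y) = Function.surjInv hS x ⊔ Function.surjInv hS y := by
  apply kr_S_inj hC
  rw [hC.S_hom, kr_SSinv, kr_SSinv, kr_SSinv]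

private lemma kr_Sinv_mono (hC : IsCEPS T S e) : Monotone (Function.surjInv hS) := by
  intro x y hxy
  have h : Function.surjInv hS y = Function.surjInv hS x ⊔ Function.surjInv hS y := by
    rw [← kr_Sinv_sup hS hC, sup_eq_right.2 hxy]
  rw [h]; exact le_sup_left

private lemma kr_Sinvk_mono (hC : IsCEPS T S e) (k : ℕ) : Monotone ((Function.surjInv hS)^[k]) :=
  Monotone.iterate (kr_Sinv_mono hS hC) k

private lemma kr_Sinv_zero (hC : IsCEPS T S e) : Function.surjInv hS (0:E) = 0 :=
  kr_S_inj hC (by rw [kr_SSinv, map_zero])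

private lemma kr_Sinv_e (hC : IsCEPS T S e) : Function.surjInv hS e = e :=
  kr_S_inj hC (by rw [kr_SSinv, hC.Se])

private lemma kr_Sk_e (hC : IsCEPS T S e) (k : ℕ) : (⇑S)^[k] e = e := by
  induction k with
  | zero => rfl
  | succ m ih => rw [Function.iterate_succ', Function.comp_apply, ih, hC.Se]

private lemma kr_Sinvk_e (hC : IsCEPS T S e) (k : ℕ) : (Function.surjInv hS)^[k] e = e := by
  induction k with
  | zero => rfl
  | succ m ih => rw [Function.iterate_succ', Function.comp_apply, ih, kr_Sinv_e hS hC]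

private lemma kr_Sinv_inf (hC : IsCEPS T S e) (x y : E) :
    Function.surjInv hS (x ⊓ y) = Function.surjInv hS x ⊓ Function.surjInv hS y := by
  apply kr_S_inj hC
  rw [kr_S_inf hC, kr_SSinv, kr_SSinv, kr_SSinv]

private lemma kr_Sinv_sub (hC : IsCEPS T S e) (x y : E) :
    Function.surjInv hS (x - y) = Function.surjInv hS x - Function.surjInv hS y := by
  apply kr_S_inj hC
  rw [map_sub, kr_SSinv, kr_SSinv, kr_SSinv]

private lemma kr_Sk_inf (hC : IsCEPS T S e) (k : ℕ) (x y : E) :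
    (⇑S)^[k] (x ⊓ y) = (⇑S)^[k] x ⊓ (⇑S)^[k] y := by
  induction k generalizing x y with
  | zero => rfl
  | succ m ih =>
    simp only [Function.iterate_succ_apply']
    rw [ih, kr_S_inf hC]

private lemma kr_Sinvk_inf (hC : IsCEPS T S e) (k : ℕ) (x y : E) :
    (Function.surjInv hS)^[k] (x ⊓ y) = (Function.surjInv hS)^[k] x ⊓ (Function.surjInv hS)^[k] y := by
  induction k generalizing x y with
  | zero => rfl
  | succ m ih =>
    simp only [Function.iterate_succ_apply']
    rw [ih, kr_Sinv_inf hS hC]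

private lemma kr_T_Sk (hC : IsCEPS T S e) (k : ℕ) (x : E) : T ((⇑S)^[k] x) = T x := by
  induction k generalizing x with
  | zero => rfl
  | succ m ih => rw [Function.iterate_succ', Function.comp_apply, hC.TS, ih]

private lemma kr_T_Sinvk (hC : IsCEPS T S e) (k : ℕ) (x : E) :
    T ((Function.surjInv hS)^[k] x) = T x := by
  conv_rhs => rw [← kr_SkSinvk hS hC k x]
  rw [kr_T_Sk hC]

end Main
section Part3
variable {E : Type*} [ConditionallyCompleteLattice E] [AddCommGroup E]
    [Module ℝ E] [CovariantClass E E (· + ·) (· ≤ ·)] [PosSMulMono ℝ E]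
    {T S : E →ₗ[ℝ] E} {e : E}

private lemma kr_comp_zero (hC : IsCEPS T S e) : IsComponent e 0 :=
  ⟨le_refl 0, hC.unit.1.le, by rw [sub_zero]; exact inf_of_le_right hC.unit.1.le⟩

private lemma kr_comp_self (hC : IsCEPS T S e) : IsComponent e e :=
  ⟨hC.unit.1.le, le_refl e, by rw [sub_self]; exact inf_of_le_left hC.unit.1.le⟩

private lemma kr_comp_compl {p : E} (h : IsComponent e p) : IsComponent e (e - p) :=
  ⟨sub_nonneg.2 h.2.1, sub_le_self e h.1, by rw [sub_sub_cancel, inf_comm]; exact h.2.2⟩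

private lemma kr_inf_sup_left (x a b : E) : x ⊓ (a ⊔ b) = (x ⊓ a) ⊔ (x ⊓ b) := by
  rw [inf_comm, kr_inf_sup_right, inf_comm a x, inf_comm b x]

private lemma kr_comp_sup {p q : E} (hp : IsComponent e p) (hq : IsComponent e q) :
    IsComponent e (p ⊔ q) := by
  refine ⟨le_sup_of_le_left hp.1, sup_le hp.2.1 hq.2.1, ?_⟩
  have h1 : e - (p ⊔ q) ≤ e - p := by have := le_sup_left (a := p) (b := q); exact sub_le_sub_left this e
  have h2 : e - (p ⊔ q) ≤ e - q := by have := le_sup_right (a := p) (b := q); exact sub_le_sub_left this e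
  rw [kr_inf_sup_left]
  have hzp : (e - (p ⊔ q)) ⊓ p ≤ 0 := by
    calc (e - (p ⊔ q)) ⊓ p ≤ (e - p) ⊓ p := inf_le_inf_right p h1
    _ = 0 := hp.2.2
  have hzq : (e - (p ⊔ q)) ⊓ q ≤ 0 := by
    calc (e - (p ⊔ q)) ⊓ q ≤ (e - q) ⊓ q := inf_le_inf_right q h2
    _ = 0 := hq.2.2
  refine le_antisymm (sup_le hzp hzq) ?_
  exact le_sup_of_le_left (le_inf (sub_nonneg.2 (sup_le hp.2.1 hq.2.1)) hp.1)

private lemma kr_comp_inf {p q : E} (hp : IsComponent e p) (hq : IsComponent e q) :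
    IsComponent e (p ⊓ q) := by
  refine ⟨le_inf hp.1 hq.1, inf_le_of_left_le hp.2.1, ?_⟩
  rw [sub_inf, kr_inf_sup_right]
  have hzp : (e - p) ⊓ (p ⊓ q) ≤ 0 := by
    calc (e - p) ⊓ (p ⊓ q) ≤ (e - p) ⊓ p := inf_le_inf_left _ inf_le_left
    _ = 0 := hp.2.2
  have hzq : (e - q) ⊓ (p ⊓ q) ≤ 0 := by
    calc (e - q) ⊓ (p ⊓ q) ≤ (e - q) ⊓ q := inf_le_inf_left _ inf_le_right
    _ = 0 := hq.2.2
  refine le_antisymm (sup_le hzp hzq) (le_sup_of_le_left (le_inf ?_ (le_inf hp.1 hq.1)))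
  simpa [sub_nonneg] using hp.2.1

private lemma kr_comp_S (hC : IsCEPS T S e) {p : E} (h : IsComponent e p) :
    IsComponent e (S p) := by
  refine ⟨by simpa using kr_S_mono hC h.1, by simpa [hC.Se] using kr_S_mono hC h.2.1, ?_⟩
  have := congrArg (⇑S) h.2.2
  rw [kr_S_inf hC, map_sub, hC.Se, map_zero] at this
  exact this

private lemma kr_comp_Sk (hC : IsCEPS T S e) (k : ℕ) {p : E} (h : IsComponent e p) :
    IsComponent e ((⇑S)^[k] p) := by
  induction k with
  | zero => exact h
  | succ m ih => rw [Function.iterate_succ_apply']; exact kr_comp_S hC ih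

variable (hS : Function.Surjective ⇑S)

private lemma kr_comp_Sinv (hC : IsCEPS T S e) {p : E} (h : IsComponent e p) :
    IsComponent e (Function.surjInv hS p) := by
  refine ⟨?_, ?_, ?_⟩
  · have := kr_Sinv_mono hS hC h.1
    rwa [kr_Sinv_zero hS hC] at this
  · have := kr_Sinv_mono hS hC h.2.1
    rwa [kr_Sinv_e hS hC] at this
  · have := congrArg (Function.surjInv hS) h.2.2
    rwa [kr_Sinv_inf hS hC, kr_Sinv_sub hS hC, kr_Sinv_e hS hC, kr_Sinv_zero hS hC] at this

private lemma kr_comp_Sinvk (hC : IsCEPS T S e) (k : ℕ) {p : E} (h : IsComponent e p) :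
    IsComponent e ((Function.surjInv hS)^[k] p) := by
  induction k with
  | zero => exact h
  | succ m ih => rw [Function.iterate_succ_apply']; exact kr_comp_Sinv hS hC ih

private lemma kr_le_compl {p x : E} (hp : IsComponent e p) (hx0 : 0 ≤ x) (hxe : x ≤ e)
    (hd : x ⊓ p = 0) : x ≤ e - p := by
  have h1 : x ⊔ p ≤ e := sup_le hxe hp.2.1
  have h2 : x + p ≤ e := by rw [← kr_sup_eq_add hd]; exact h1
  exact le_sub_iff_add_le.2 h2

private lemma kr_disj_of_le_compl {p x : E} (hp : IsComponent e p) (hx0 : 0 ≤ x)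
    (hle : x ≤ e - p) : x ⊓ p = 0 := by
  refine le_antisymm ?_ (le_inf hx0 hp.1)
  calc x ⊓ p ≤ (e - p) ⊓ p := inf_le_inf_right p hle
  _ = 0 := hp.2.2

private lemma kr_comp_split {p x : E} (hp : IsComponent e p) (hxe : x ≤ e) (hx0 : 0 ≤ x) :
    x = (x ⊓ p) ⊔ (x ⊓ (e - p)) := by
  have h1 : p ⊔ (e - p) = e := by
    rw [kr_sup_eq_add (by rw [inf_comm]; exact hp.2.2)]
    abel
  rw [← kr_inf_sup_left, h1, inf_eq_left.2 hxe]

private lemma kr_comp_isLUB {A : Set E} {s : E} (hA : ∀ a ∈ A, IsComponent e a)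
    (hne : A.Nonempty) (h : IsLUB A s) : IsComponent e s := by
  obtain ⟨a0, ha0⟩ := hne
  refine ⟨(hA a0 ha0).1.trans (h.1 ha0), h.2 (fun a ha => (hA a ha).2.1), ?_⟩
  have hlub2 := kr_isLUB_inf h (e - s)
  have hub : ∀ x ∈ (fun d => (e - s) ⊓ d) '' A, x ≤ 0 := by
    rintro _ ⟨a, ha, rfl⟩
    have h1 : e - s ≤ e - a := sub_le_sub_left (h.1 ha) e
    calc (e - s) ⊓ a ≤ (e - a) ⊓ a := inf_le_inf_right a h1
    _ = 0 := (hA a ha).2.2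
  have hle : (e - s) ⊓ s ≤ 0 := hlub2.2 hub
  have hge : 0 ≤ (e - s) ⊓ s := le_inf (by
      have : s ≤ e := h.2 (fun a ha => (hA a ha).2.1)
      simpa [sub_nonneg] using this) ((hA a0 ha0).1.trans (h.1 ha0))
  exact le_antisymm hle hge

/- partialSup lemmas -/
private lemma kr_psup_succ (f : ℕ → E) (m : ℕ) :
    partialSup f (m + 1) = partialSup f m ⊔ f m := rfl

private lemma kr_psup_mono (f : ℕ → E) : Monotone (partialSup f) := by
  apply monotone_nat_of_le_succ
  intro m
  exact le_sup_left

private lemma kr_psup_nonneg (f : ℕ → E) (m : ℕ) : 0 ≤ partialSup f m := by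
  have := kr_psup_mono f (Nat.zero_le m)
  simpa [partialSup] using this

private lemma kr_le_psup (f : ℕ → E) {i m : ℕ} (h : i < m) : f i ≤ partialSup f m := by
  induction m with
  | zero => omega
  | succ k ih =>
    rcases Nat.lt_succ_iff_lt_or_eq.1 h with h' | h'
    · exact (ih h').trans le_sup_left
    · subst h'; exact le_sup_right

private lemma kr_psup_le (f : ℕ → E) {c : E} (hc : 0 ≤ c) {m : ℕ} (h : ∀ i < m, f i ≤ c) :
    partialSup f m ≤ c := by
  induction m with
  | zero => simpa [partialSup] using hc
  | succ k ih =>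
    exact sup_le (ih (fun i hi => h i (hi.trans (Nat.lt_succ_self k)))) (h k (Nat.lt_succ_self k))

private lemma kr_psup_comp (hC : IsCEPS T S e) {f : ℕ → E} (hf : ∀ i, IsComponent e (f i))
    (m : ℕ) : IsComponent e (partialSup f m) := by
  induction m with
  | zero => exact kr_comp_zero hC
  | succ k ih => exact kr_comp_sup ih (hf k)

private lemma kr_map_psup (g : E → E) (hg0 : g 0 = 0)
    (hgsup : ∀ x y : E, g (x ⊔ y) = g x ⊔ g y) (f : ℕ → E) (m : ℕ) :
    g (partialSup f m) = partialSup (fun i => g (f i)) m := by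
  induction m with
  | zero => exact hg0
  | succ k ih => rw [kr_psup_succ, hgsup, ih]; rfl

private lemma kr_psup_inf_eq_zero {f : ℕ → E} {z : E} (hz : 0 ≤ z) {m : ℕ}
    (h : ∀ i < m, f i ⊓ z = 0) : partialSup f m ⊓ z = 0 := by
  induction m with
  | zero => simpa [partialSup] using inf_of_le_left hz
  | succ k ih =>
    rw [kr_psup_succ, kr_inf_sup_right, ih (fun i hi => h i (hi.trans (Nat.lt_succ_self k))),
      h k (Nat.lt_succ_self k), sup_idem]

private lemma kr_psup_eq_sum {f : ℕ → E} {m : ℕ} (hf : ∀ i, 0 ≤ f i)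
    (hd : ∀ i < m, ∀ j < m, i ≠ j → f i ⊓ f j = 0) :
    partialSup f m = ∑ i ∈ Finset.range m, f i := by
  induction m with
  | zero => simp [partialSup]
  | succ k ih =>
    rw [kr_psup_succ, Finset.sum_range_succ,
      ← ih (fun i hi j hj hij => hd i (hi.trans (Nat.lt_succ_self k))
        j (hj.trans (Nat.lt_succ_self k)) hij),
      kr_sup_eq_add (kr_psup_inf_eq_zero (hf k)
        (fun i hi => hd i (hi.trans (Nat.lt_succ_self k)) k (Nat.lt_succ_self k) hi.ne))]

/- LUB continuity lemmas -/
private lemma kr_T_isLUB (hC : IsCEPS T S e) {g : ℕ → E} (hg : Monotone g) {s : E}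
    (h : IsLUB (Set.range g) s) : IsLUB (Set.range fun m => T (g m)) (T s) := by
  have hle : ∀ m, g m ≤ s := fun m => h.1 ⟨m, rfl⟩
  set D := Set.range fun m => s - g m with hD
  have hne : D.Nonempty := ⟨s - g 0, ⟨0, rfl⟩⟩
  have hdir : DirectedOn (· ≥ ·) D := by
    rintro _ ⟨a, rfl⟩ _ ⟨b, rfl⟩
    exact ⟨s - g (max a b), ⟨max a b, rfl⟩,
      sub_le_sub_left (hg (le_max_left a b)) s, sub_le_sub_left (hg (le_max_right a b)) s⟩
  have hglb : IsGLB D 0 := by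
    constructor
    · rintro _ ⟨m, rfl⟩; simpa [sub_nonneg] using hle m
    · intro b hb
      have h1 : ∀ m, g m ≤ s - b := fun m => by
        have hbm := le_sub_iff_add_le.1 (hb ⟨m, rfl⟩)
        rw [add_comm] at hbm
        exact le_sub_iff_add_le.2 hbm
      have h2 : s ≤ s - b := h.2 (by rintro _ ⟨m, rfl⟩; exact h1 m)
      have h3 : s + b ≤ s := le_sub_iff_add_le.1 h2
      have h4 : s + b ≤ s + 0 := by simpa using h3
      exact le_of_add_le_add_left h4
  have hTglb := hC.T_ordCont D hne hdir hglb
  have himg : ⇑T '' D = Set.range fun m => T s - T (g m) := by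
    ext x
    constructor
    · rintro ⟨_, ⟨m, rfl⟩, rfl⟩; exact ⟨m, by rw [map_sub]⟩
    · rintro ⟨m, rfl⟩; exact ⟨s - g m, ⟨m, rfl⟩, by rw [map_sub]⟩
  rw [himg] at hTglb
  constructor
  · rintro _ ⟨m, rfl⟩; exact kr_T_mono hC (hle m)
  · intro u hu
    have hlb : T s - u ∈ lowerBounds (Set.range fun m => T s - T (g m)) := by
      rintro _ ⟨m, rfl⟩
      exact sub_le_sub_left (hu ⟨m, rfl⟩) (T s)
    have : T s - u ≤ 0 := hTglb.2 hlb
    have h5 : T s ≤ u := by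
      have := add_le_add_right this u
      simpa [sub_add_cancel] using this
    exact h5

include hS

private lemma kr_Sk_isLUB (hC : IsCEPS T S e) (k : ℕ) {A : Set E} {s : E} (h : IsLUB A s) :
    IsLUB ((⇑S)^[k] '' A) ((⇑S)^[k] s) := by
  constructor
  · rintro _ ⟨a, ha, rfl⟩; exact kr_Sk_mono hC k (h.1 ha)
  · intro u hu
    have h1 : ∀ a ∈ A, a ≤ (Function.surjInv hS)^[k] u := by
      intro a ha
      have h2 : (⇑S)^[k] a ≤ u := hu ⟨a, ha, rfl⟩
      have := kr_Sinvk_mono hS hC k h2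
      rwa [kr_SinvkSk hS hC] at this
    have h3 : s ≤ (Function.surjInv hS)^[k] u := h.2 h1
    have := kr_Sk_mono hC k h3
    rwa [kr_SkSinvk hS hC] at this

private lemma kr_Sinvk_isLUB (hC : IsCEPS T S e) (k : ℕ) {A : Set E} {s : E} (h : IsLUB A s) :
    IsLUB ((Function.surjInv hS)^[k] '' A) ((Function.surjInv hS)^[k] s) := by
  constructor
  · rintro _ ⟨a, ha, rfl⟩; exact kr_Sinvk_mono hS hC k (h.1 ha)
  · intro u hu
    have h1 : ∀ a ∈ A, a ≤ (⇑S)^[k] u := by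
      intro a ha
      have h2 : (Function.surjInv hS)^[k] a ≤ u := hu ⟨a, ha, rfl⟩
      have := kr_Sk_mono hC k h2
      rwa [kr_SkSinvk hS hC] at this
    have h3 : s ≤ (⇑S)^[k] u := h.2 h1
    have := kr_Sinvk_mono hS hC k h3
    rwa [kr_SinvkSk hS hC] at this

omit hS

private lemma kr_isLUB_sup {g1 g2 : ℕ → E} {s1 s2 : E}
    (h1 : IsLUB (Set.range g1) s1) (h2 : IsLUB (Set.range g2) s2) :
    IsLUB (Set.range fun m => g1 m ⊔ g2 m) (s1 ⊔ s2) := by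
  constructor
  · rintro _ ⟨m, rfl⟩
    exact sup_le_sup (h1.1 ⟨m, rfl⟩) (h2.1 ⟨m, rfl⟩)
  · intro u hu
    refine sup_le (h1.2 ?_) (h2.2 ?_)
    · rintro _ ⟨m, rfl⟩
      exact le_sup_left.trans (hu ⟨m, rfl⟩ : g1 m ⊔ g2 m ≤ u)
    · rintro _ ⟨m, rfl⟩
      exact le_sup_right.trans (hu ⟨m, rfl⟩ : g1 m ⊔ g2 m ≤ u)

private lemma kr_inf_isLUB_zero {A : Set E} {s x : E} (h : IsLUB A s) (hne : A.Nonempty)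
    (hA0 : ∀ a ∈ A, 0 ≤ a) (hx : 0 ≤ x) (hd : ∀ a ∈ A, x ⊓ a = 0) : x ⊓ s = 0 := by
  obtain ⟨a0, ha0⟩ := hne
  have hlub := kr_isLUB_inf h x
  have hle : x ⊓ s ≤ 0 := hlub.2 (by rintro _ ⟨a, ha, rfl⟩; exact (hd a ha).le)
  exact le_antisymm hle (le_inf hx ((hA0 a0 ha0).trans (h.1 ha0)))
end Part3
section Part4
variable {E : Type*} [ConditionallyCompleteLattice E] [AddCommGroup E]
    [Module ℝ E] [CovariantClass E E (· + ·) (· ≤ ·)] [PosSMulMono ℝ E]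
    {T S : E →ₗ[ℝ] E} {e : E} (hS : Function.Surjective ⇑S)

private lemma kr_comp_trans {c u : E} (hc : IsComponent e c) (hu : IsComponent c u) :
    IsComponent e u := by
  refine ⟨hu.1, hu.2.1.trans hc.2.1, ?_⟩
  have hsum : e - u = (e - c) + (c - u) := by abel
  rw [hsum]
  refine kr_add_inf_eq_zero (sub_nonneg.2 hc.2.1) (sub_nonneg.2 hu.2.1) hu.1 ?_ hu.2.2
  refine le_antisymm ?_ (le_inf (sub_nonneg.2 hc.2.1) hu.1)
  calc (e - c) ⊓ u ≤ (e - c) ⊓ c := inf_le_inf_left _ hu.2.1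
  _ = 0 := hc.2.2

private lemma kr_Sinvk_zero (hC : IsCEPS T S e) (k : ℕ) : (Function.surjInv hS)^[k] (0:E) = 0 := by
  induction k with
  | zero => rfl
  | succ m ih => rw [Function.iterate_succ_apply', ih, kr_Sinv_zero hS hC]

private lemma kr_Sk_sup (hC : IsCEPS T S e) (k : ℕ) (x y : E) :
    (⇑S)^[k] (x ⊔ y) = (⇑S)^[k] x ⊔ (⇑S)^[k] y := by
  induction k generalizing x y with
  | zero => rfl
  | succ m ih => simp only [Function.iterate_succ_apply']; rw [ih, hC.S_hom]

private lemma kr_Sinvk_sup (hC : IsCEPS T S e) (k : ℕ) (x y : E) :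
    (Function.surjInv hS)^[k] (x ⊔ y)
      = (Function.surjInv hS)^[k] x ⊔ (Function.surjInv hS)^[k] y := by
  induction k generalizing x y with
  | zero => rfl
  | succ m ih => simp only [Function.iterate_succ_apply']; rw [ih, kr_Sinv_sup hS hC]

private lemma kr_Sk_fixed (hC : IsCEPS T S e) {c : E} (h : S c = c) (k : ℕ) :
    (⇑S)^[k] c = c := by
  induction k with
  | zero => rfl
  | succ m ih => rw [Function.iterate_succ_apply', ih, h]

private lemma kr_Sinv_fixed (hC : IsCEPS T S e) {c : E} (h : S c = c) :
    Function.surjInv hS c = c :=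
  kr_S_inj hC (by rw [kr_SSinv, h])

private lemma kr_Sinvk_fixed (hC : IsCEPS T S e) {c : E} (h : S c = c) (k : ℕ) :
    (Function.surjInv hS)^[k] c = c := by
  induction k with
  | zero => rfl
  | succ m ih => rw [Function.iterate_succ_apply', ih, kr_Sinv_fixed hS hC h]

/-- Facts about `qComp Sinv e b k` for a component `b`. -/
private lemma kr_qComp_comp (hC : IsCEPS T S e) {b : E} (hb : IsComponent e b) (k : ℕ) :
    IsComponent e (qComp (Function.surjInv hS) e b k) := by
  unfold qComp
  exact kr_comp_inf (kr_comp_inf hb (kr_comp_Sinvk hS hC k hb))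
    (kr_comp_compl (kr_psup_comp hC (fun i => kr_comp_Sinvk hS hC (i+1) hb) (k-1)))

private lemma kr_qComp_le (hC : IsCEPS T S e) {b : E} (k : ℕ) :
    qComp (Function.surjInv hS) e b k ≤ b := inf_le_left.trans inf_le_left

private lemma kr_qComp_le_Sinvk (hC : IsCEPS T S e) {b : E} (k : ℕ) :
    qComp (Function.surjInv hS) e b k ≤ (Function.surjInv hS)^[k] b :=
  inf_le_left.trans inf_le_right

private lemma kr_qComp_disj (hC : IsCEPS T S e) {b : E} (hb : IsComponent e b) {k j : ℕ}
    (hj1 : 1 ≤ j) (hjk : j < k) :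
    qComp (Function.surjInv hS) e b k ⊓ (Function.surjInv hS)^[j] b = 0 := by
  set P := partialSup (fun i => (Function.surjInv hS)^[i+1] b) (k-1) with hP
  have hPcomp : IsComponent e P := kr_psup_comp hC (fun i => kr_comp_Sinvk hS hC (i+1) hb) (k-1)
  have h1 : (Function.surjInv hS)^[j] b ≤ P := by
    have : j - 1 < k - 1 := by omega
    have h2 := kr_le_psup (fun i => (Function.surjInv hS)^[i+1] b) this
    simpa only [Nat.sub_add_cancel hj1] using h2
  have h2 : qComp (Function.surjInv hS) e b k ≤ e - P := inf_le_right
  have h3 : qComp (Function.surjInv hS) e b k ⊓ (Function.surjInv hS)^[j] b ≤ (e - P) ⊓ P :=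
    inf_le_inf h2 h1
  refine le_antisymm (h3.trans_eq hPcomp.2.2) (le_inf ?_ (kr_comp_Sinvk hS hC j hb).1)
  exact (kr_qComp_comp hS hC hb k).1

private lemma kr_qComp_self_disj (hC : IsCEPS T S e) {b : E} (hb : IsComponent e b) {k j : ℕ}
    (hj1 : 1 ≤ j) (hjk : j < k) :
    qComp (Function.surjInv hS) e b k ⊓ (Function.surjInv hS)^[j]
      (qComp (Function.surjInv hS) e b k) = 0 := by
  refine le_antisymm ?_ (le_inf (kr_qComp_comp hS hC hb k).1
    (kr_comp_Sinvk hS hC j (kr_qComp_comp hS hC hb k)).1)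
  calc qComp (Function.surjInv hS) e b k ⊓ (Function.surjInv hS)^[j]
        (qComp (Function.surjInv hS) e b k)
      ≤ qComp (Function.surjInv hS) e b k ⊓ (Function.surjInv hS)^[j] b :=
        inf_le_inf_left _ (kr_Sinvk_mono hS hC j (kr_qComp_le hS hC k))
  _ = 0 := kr_qComp_disj hS hC hb hj1 hjk

/-- The marker component: a `K`-separated component meeting every invariant component. -/
private lemma kr_marker (hC : IsCEPS T S e) (hAp : IsAperiodic (Function.surjInv hS) e e)
    (K : ℕ) (hK : 1 ≤ K) :
    ∃ B : E, IsComponent e B ∧ (∀ j, 1 ≤ j → j < K → B ⊓ (Function.surjInv hS)^[j] B = 0) ∧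
      ∀ c : E, IsComponent e c → S c = c → c ⊓ B = 0 → c = 0 := by
  set Sep := {b : E | IsComponent e b ∧ ∀ j, 1 ≤ j → j < K → b ⊓ (Function.surjInv hS)^[j] b = 0}
    with hSepDef
  have hzorn := zorn_le₀ Sep ?_
  · obtain ⟨B, hBmax⟩ := hzorn
    have hBSep : B ∈ Sep := hBmax.1
    refine ⟨B, hBSep.1, hBSep.2, ?_⟩
    intro c hc hfix hdisj
    by_contra hc0
    obtain ⟨k, hkK, u, hu, hq0⟩ := hAp K c hc hc0
    have hk1 : 1 ≤ k := hK.trans hkK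
    have hue : IsComponent e u := kr_comp_trans hc hu
    set p := qComp (Function.surjInv hS) e u k with hpdef
    have hpcomp : IsComponent e p := kr_qComp_comp hS hC hue k
    have hpc : p ≤ c := (kr_qComp_le hS hC k).trans hu.2.1
    have hBp : B ⊔ p ∈ Sep := by
      refine ⟨kr_comp_sup hBSep.1 hpcomp, ?_⟩
      intro j hj1 hjK
      rw [kr_Sinvk_sup hS hC, kr_inf_sup_left, kr_inf_sup_right, kr_inf_sup_right]
      have hcinv : (Function.surjInv hS)^[j] c = c := kr_Sinvk_fixed hS hC hfix j
      have t1 : B ⊓ (Function.surjInv hS)^[j] B = 0 := hBSep.2 j hj1 hjK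
      have t2 : B ⊓ (Function.surjInv hS)^[j] p = 0 := by
        refine le_antisymm ?_ (le_inf hBSep.1.1 (kr_comp_Sinvk hS hC j hpcomp).1)
        calc B ⊓ (Function.surjInv hS)^[j] p ≤ B ⊓ c := by
              refine inf_le_inf_left _ ?_
              have := kr_Sinvk_mono hS hC j hpc
              rwa [hcinv] at this
        _ = 0 := by rw [inf_comm]; exact hdisj
      have t3 : p ⊓ (Function.surjInv hS)^[j] B = 0 := by
        have hcB : c ⊓ (Function.surjInv hS)^[j] B = 0 := by
          have := congrArg ((Function.surjInv hS)^[j]) hdisj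
          rwa [kr_Sinvk_inf hS hC, hcinv, kr_Sinvk_zero hS hC] at this
        refine le_antisymm ?_ (le_inf hpcomp.1 (kr_comp_Sinvk hS hC j hBSep.1).1)
        calc p ⊓ (Function.surjInv hS)^[j] B ≤ c ⊓ (Function.surjInv hS)^[j] B :=
              inf_le_inf_right _ hpc
        _ = 0 := hcB
      have t4 : p ⊓ (Function.surjInv hS)^[j] p = 0 :=
        kr_qComp_self_disj hS hC hue hj1 (lt_of_lt_of_le hjK hkK)
      rw [t1, t2, t3, t4]
      simp
    have hle : B ⊔ p ≤ B := hBmax.2 hBp le_sup_left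
    have hpB : p ≤ B := le_sup_right.trans hle
    have : p = 0 := by
      refine le_antisymm ?_ hpcomp.1
      calc p = p ⊓ B := (inf_eq_left.2 hpB).symm
      _ ≤ c ⊓ B := inf_le_inf_right _ hpc
      _ = 0 := hdisj
    exact hq0 this
  · -- chains have upper bounds in Sep
    intro ch hch hchain
    rcases ch.eq_empty_or_nonempty with rfl | hne
    · refine ⟨0, ⟨kr_comp_zero hC, ?_⟩, by simp⟩
      intro j hj1 hjK
      rw [kr_Sinvk_zero hS hC]
      simp
    · have hbdd : BddAbove ch := ⟨e, fun b hb => (hch hb).1.2.1⟩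
      have hlub : IsLUB ch (sSup ch) := isLUB_csSup hne hbdd
      refine ⟨sSup ch, ⟨kr_comp_isLUB (fun a ha => (hch ha).1) hne hlub, ?_⟩,
        fun z hz => hlub.1 hz⟩
      intro j hj1 hjK
      have step1 : ∀ b ∈ ch, sSup ch ⊓ (Function.surjInv hS)^[j] b = 0 := by
        intro b hb
        have h0 : ∀ a ∈ ch, (Function.surjInv hS)^[j] b ⊓ a = 0 := by
          intro a ha
          rcases eq_or_ne a b with rfl | hab
          · rw [inf_comm]; exact (hch ha).2 j hj1 hjK
          · rcases hchain.total ha hb with hab' | hab'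
            · refine le_antisymm ?_ (le_inf (kr_comp_Sinvk hS hC j (hch hb).1).1 (hch ha).1.1)
              calc (Function.surjInv hS)^[j] b ⊓ a ≤ (Function.surjInv hS)^[j] b ⊓ b :=
                    inf_le_inf_left _ hab'
              _ = 0 := by rw [inf_comm]; exact (hch hb).2 j hj1 hjK
            · refine le_antisymm ?_ (le_inf (kr_comp_Sinvk hS hC j (hch hb).1).1 (hch ha).1.1)
              calc (Function.surjInv hS)^[j] b ⊓ a ≤ (Function.surjInv hS)^[j] a ⊓ a := by
                    exact inf_le_inf_right _ (kr_Sinvk_mono hS hC j hab')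
              _ = 0 := by rw [inf_comm]; exact (hch ha).2 j hj1 hjK
        have := kr_inf_isLUB_zero hlub hne (fun a ha => (hch ha).1.1)
          (kr_comp_Sinvk hS hC j (hch hb).1).1 h0
        rw [inf_comm] at this
        exact this
      have hlub2 := kr_Sinvk_isLUB hS hC j hlub
      have hne2 : ((Function.surjInv hS)^[j] '' ch).Nonempty := hne.image _
      refine kr_inf_isLUB_zero hlub2 hne2 ?_ ?_ ?_
      · rintro _ ⟨b, hb, rfl⟩
        exact (kr_comp_Sinvk hS hC j (hch hb).1).1
      · obtain ⟨b0, hb0⟩ := hne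
        exact (hch hb0).1.1.trans (hlub.1 hb0)
      · rintro _ ⟨b, hb, rfl⟩
        exact step1 b hb
end Part4
section Part5
variable {E : Type*} [ConditionallyCompleteLattice E] [AddCommGroup E]
    [Module ℝ E] [CovariantClass E E (· + ·) (· ≤ ·)] [PosSMulMono ℝ E]
    {T S : E →ₗ[ℝ] E} {e : E} (hS : Function.Surjective ⇑S)

private lemma kr_Sk_zero (hC : IsCEPS T S e) (k : ℕ) : (⇑S)^[k] (0:E) = 0 := by
  induction k with
  | zero => rfl
  | succ m ih => rw [Function.iterate_succ_apply', ih, map_zero]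

private lemma kr_Sk_sub (hC : IsCEPS T S e) (k : ℕ) (x y : E) :
    (⇑S)^[k] (x - y) = (⇑S)^[k] x - (⇑S)^[k] y := by
  induction k generalizing x y with
  | zero => rfl
  | succ m ih => simp only [Function.iterate_succ_apply']; rw [ih, map_sub]

omit hS in
private lemma kr_psup_le_psup {f g : ℕ → E} {m : ℕ} (h : ∀ i < m, f i ≤ g i) :
    partialSup f m ≤ partialSup g m := by
  induction m with
  | zero => exact le_refl _
  | succ k ih =>
    exact sup_le_sup (ih (fun i hi => h i (hi.trans (Nat.lt_succ_self k))))
      (h k (Nat.lt_succ_self k))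

omit hS in
private lemma kr_psup_sup (f g : ℕ → E) (m : ℕ) :
    partialSup (fun k => f k ⊔ g k) m = partialSup f m ⊔ partialSup g m := by
  induction m with
  | zero => simp [partialSup]
  | succ k ih =>
    rw [kr_psup_succ, kr_psup_succ, kr_psup_succ, ih]
    exact sup_sup_sup_comm _ _ _ _

omit hS in
private lemma kr_psup_split (f : ℕ → E) (t d : ℕ) :
    partialSup f (t + d) = partialSup f t ⊔ partialSup (fun j => f (t + j)) d := by
  induction d with
  | zero => exact (sup_of_le_left (kr_psup_nonneg f t)).symm
  | succ k ih =>
    rw [← Nat.add_assoc, kr_psup_succ, ih, kr_psup_succ, sup_assoc]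

omit hS in
private lemma kr_psup_inf_psup_eq_zero {f g : ℕ → E} {m m' : ℕ}
    (hf : ∀ i, 0 ≤ f i) (hg : ∀ j, 0 ≤ g j)
    (h : ∀ i < m, ∀ j < m', f i ⊓ g j = 0) :
    partialSup f m ⊓ partialSup g m' = 0 := by
  refine kr_psup_inf_eq_zero (kr_psup_nonneg g m') ?_
  intro i hi
  rw [inf_comm]
  refine kr_psup_inf_eq_zero (hf i) ?_
  intro j hj
  rw [inf_comm]
  exact h i hi j hj

omit hS in
private lemma kr_T_psup_sum (hC : IsCEPS T S e) {f : ℕ → E} {m : ℕ} (hf : ∀ i, 0 ≤ f i)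
    (hd : ∀ i < m, ∀ j < m, i ≠ j → f i ⊓ f j = 0) :
    T (partialSup f m) = ∑ i ∈ Finset.range m, T (f i) := by
  rw [kr_psup_eq_sum hf hd, map_sum]

omit hS in
private lemma kr_sum_le_sum {f g : ℕ → E} {m : ℕ} (h : ∀ i < m, f i ≤ g i) :
    ∑ i ∈ Finset.range m, f i ≤ ∑ i ∈ Finset.range m, g i := by
  induction m with
  | zero => simp
  | succ k ih =>
    rw [Finset.sum_range_succ, Finset.sum_range_succ]
    exact add_le_add (ih (fun i hi => h i (hi.trans (Nat.lt_succ_self k))))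
      (h k (Nat.lt_succ_self k))

omit hS in
private lemma kr_smul_scalar_mono {a b : ℝ} (hab : a ≤ b) {x : E} (hx : 0 ≤ x) :
    a • x ≤ b • x := by
  have h0 : (0:E) ≤ (b - a) • x := by
    have := smul_le_smul_of_nonneg_left hx (sub_nonneg.2 hab)
    rwa [smul_zero] at this
  calc a • x = a • x + 0 := by rw [add_zero]
  _ ≤ a • x + (b - a) • x := add_le_add (le_refl _) h0
  _ = b • x := by rw [← add_smul]; ring_nf

include hS in
private lemma kr_Sk_isLUB_range (hC : IsCEPS T S e) (k : ℕ) {g : ℕ → E} {s : E}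
    (h : IsLUB (Set.range g) s) :
    IsLUB (Set.range fun m => (⇑S)^[k] (g m)) ((⇑S)^[k] s) := by
  have h1 := kr_Sk_isLUB hS hC k h
  have h2 : (⇑S)^[k] '' Set.range g = Set.range fun m => (⇑S)^[k] (g m) := by
    rw [← Set.range_comp]; rfl
  rwa [h2] at h1

include hS in
private lemma kr_S_isLUB_range (hC : IsCEPS T S e) {g : ℕ → E} {s : E}
    (h : IsLUB (Set.range g) s) : IsLUB (Set.range fun m => S (g m)) (S s) := by
  simpa using kr_Sk_isLUB_range hS hC 1 h

omit hS in
private lemma kr_inf_isLUB_zero₂ {g h : ℕ → E} {a b : E}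
    (ha : IsLUB (Set.range g) a) (hb : IsLUB (Set.range h) b)
    (hg0 : ∀ m, 0 ≤ g m) (hh0 : ∀ m, 0 ≤ h m)
    (hd : ∀ m m', g m ⊓ h m' = 0) : a ⊓ b = 0 := by
  refine kr_inf_isLUB_zero hb ⟨h 0, 0, rfl⟩ (by rintro _ ⟨m, rfl⟩; exact hh0 m)
    ((hg0 0).trans (ha.1 ⟨0, rfl⟩)) ?_
  rintro _ ⟨m', rfl⟩
  rw [inf_comm]
  refine kr_inf_isLUB_zero ha ⟨g 0, 0, rfl⟩ (by rintro _ ⟨m, rfl⟩; exact hg0 m) (hh0 m') ?_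
  rintro _ ⟨m, rfl⟩
  rw [inf_comm]
  exact hd m m'

/-- Disjointness of the Kac tower floors. -/
private lemma kr_floor_core (hC : IsCEPS T S e) {B : E} (hB : IsComponent e B)
    {k m j i : ℕ} (hk : 1 ≤ k) (hm : 1 ≤ m) (hjk : j < k) (him : i < m)
    (hji : j ≤ i) (hne : ¬(k = m ∧ j = i)) :
    (⇑S)^[j] (qComp (Function.surjInv hS) e B k) ⊓
      (⇑S)^[i] (qComp (Function.surjInv hS) e B m) = 0 := by
  set Bk := qComp (Function.surjInv hS) e B k with hBk
  set Bm := qComp (Function.surjInv hS) e B m with hBm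
  have hBkc : IsComponent e Bk := kr_qComp_comp hS hC hB k
  have hBmc : IsComponent e Bm := kr_qComp_comp hS hC hB m
  set t := i - j with ht
  have hit : i = j + t := by omega
  have key : Bk ⊓ (⇑S)^[t] Bm = 0 := by
    rcases Nat.eq_zero_or_pos t with ht0 | ht1
    · -- t = 0, so k ≠ m
      have hkm : k ≠ m := by omega
      rw [ht0]
      simp only [Function.iterate_zero, id]
      rcases lt_or_gt_of_ne hkm with hlt | hgt
      · have h1 : Bm ⊓ (Function.surjInv hS)^[k] B = 0 := kr_qComp_disj hS hC hB hk hlt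
        refine le_antisymm ?_ (le_inf hBkc.1 hBmc.1)
        calc Bk ⊓ Bm ≤ (Function.surjInv hS)^[k] B ⊓ Bm :=
              inf_le_inf_right _ (kr_qComp_le_Sinvk hS hC k)
        _ = 0 := by rw [inf_comm]; exact h1
      · have h1 : Bk ⊓ (Function.surjInv hS)^[m] B = 0 := kr_qComp_disj hS hC hB hm hgt
        refine le_antisymm ?_ (le_inf hBkc.1 hBmc.1)
        calc Bk ⊓ Bm ≤ Bk ⊓ (Function.surjInv hS)^[m] B :=
              inf_le_inf_left _ (kr_qComp_le_Sinvk hS hC m)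
        _ = 0 := h1
    · -- 1 ≤ t < m
      have htm : t < m := by omega
      have h1 : Bm ⊓ (Function.surjInv hS)^[t] B = 0 := kr_qComp_disj hS hC hB ht1 htm
      have h2 : Bm ≤ e - (Function.surjInv hS)^[t] B :=
        kr_le_compl (kr_comp_Sinvk hS hC t hB) hBmc.1 hBmc.2.1 h1
      have h3 : (⇑S)^[t] Bm ≤ e - B := by
        have := kr_Sk_mono hC t h2
        rwa [kr_Sk_sub hC, kr_Sk_e hC, kr_SkSinvk hS hC] at this
      refine le_antisymm ?_ (le_inf hBkc.1 (by
        have := kr_Sk_mono hC t hBmc.1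
        rwa [kr_Sk_zero hC] at this))
      calc Bk ⊓ (⇑S)^[t] Bm ≤ B ⊓ (e - B) :=
            inf_le_inf (kr_qComp_le hS hC k) h3
      _ = 0 := by rw [inf_comm]; exact hB.2.2
  rw [hit, Function.iterate_add_apply, ← kr_Sk_inf hC j, key, kr_Sk_zero hC]

private lemma kr_floor_disj (hC : IsCEPS T S e) {B : E} (hB : IsComponent e B)
    {k m j i : ℕ} (hk : 1 ≤ k) (hm : 1 ≤ m) (hjk : j < k) (him : i < m)
    (hne : ¬(k = m ∧ j = i)) :
    (⇑S)^[j] (qComp (Function.surjInv hS) e B k) ⊓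
      (⇑S)^[i] (qComp (Function.surjInv hS) e B m) = 0 := by
  rcases le_total j i with hji | hij
  · exact kr_floor_core hS hC hB hk hm hjk him hji hne
  · rw [inf_comm]
    exact kr_floor_core hS hC hB hm hk him hjk hij (by tauto)
end Part5
section Part6
variable {E : Type*} [ConditionallyCompleteLattice E] [AddCommGroup E]
    [Module ℝ E] [CovariantClass E E (· + ·) (· ≤ ·)] [PosSMulMono ℝ E]
    {T S : E →ₗ[ℝ] E} {e : E} (hS : Function.Surjective ⇑S)

include hS in
private lemma kr_kac (hC : IsCEPS T S e) (hAp : IsAperiodic (Function.surjInv hS) e e)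
    (K : ℕ) (hK : 1 ≤ K) :
    ∃ B : E, IsComponent e B ∧ (∀ k, 1 ≤ k → k < K → qComp (Function.surjInv hS) e B k = 0) ∧
      IsLUB (Set.range fun m => partialSup
        (fun k => partialSup (fun j => (⇑S)^[j] (qComp (Function.surjInv hS) e B (k+1)))
          (k+1)) m) e := by
  obtain ⟨B, hBc, hBsep, hBmeet⟩ := kr_marker hS hC hAp K hK
  refine ⟨B, hBc, ?_, ?_⟩
  · intro k hk1 hkK
    refine le_antisymm ?_ (kr_qComp_comp hS hC hBc k).1
    calc qComp (Function.surjInv hS) e B k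
        ≤ B ⊓ (Function.surjInv hS)^[k] B :=
          le_inf (kr_qComp_le hS hC k) (kr_qComp_le_Sinvk hS hC k)
    _ = 0 := hBsep k hk1 hkK
  · set Bq : ℕ → E := fun k => qComp (Function.surjInv hS) e B k with hBqdef
    have hBqc : ∀ k, IsComponent e (Bq k) := fun k => kr_qComp_comp hS hC hBc k
    set Tw : ℕ → E := fun k => partialSup (fun j => (⇑S)^[j] (Bq k)) k with hTwdef
    have hTwc : ∀ k, IsComponent e (Tw k) :=
      fun k => kr_psup_comp hC (fun j => kr_comp_Sk hC j (hBqc k)) k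
    set Vm : ℕ → E := fun m => partialSup (fun k => Tw (k+1)) m with hVmdef
    have hVmc : ∀ m, IsComponent e (Vm m) :=
      fun m => kr_psup_comp hC (fun k => hTwc (k+1)) m
    have hVmlub : IsLUB (Set.range Vm) (sSup (Set.range Vm)) :=
      isLUB_csSup (Set.range_nonempty Vm) ⟨e, by rintro _ ⟨m, rfl⟩; exact (hVmc m).2.1⟩
    set v := sSup (Set.range Vm) with hvdef
    have hvcomp : IsComponent e v :=
      kr_comp_isLUB (by rintro _ ⟨m, rfl⟩; exact hVmc m) (Set.range_nonempty Vm) hVmlub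
    set ym : ℕ → E := fun m => partialSup (fun k => Bq (k+1)) m with hymdef
    have hymlub : IsLUB (Set.range ym) (sSup (Set.range ym)) :=
      isLUB_csSup (Set.range_nonempty ym) ⟨e, by
        rintro _ ⟨m, rfl⟩
        exact (kr_psup_comp hC (fun k => hBqc (k+1)) m).2.1⟩
    set y := sSup (Set.range ym) with hydef
    have hycomp : IsComponent e y :=
      kr_comp_isLUB (by rintro _ ⟨m, rfl⟩; exact kr_psup_comp hC (fun k => hBqc (k+1)) m)
        (Set.range_nonempty ym) hymlub
    -- step (4): return-time decomposition
    have h4 : ∀ m, ym m = B ⊓ partialSup (fun j => (Function.surjInv hS)^[j+1] B) m := by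
      intro m
      induction m with
      | zero => exact (inf_of_le_right hBc.1).symm
      | succ m ih =>
        set P := partialSup (fun j => (Function.surjInv hS)^[j+1] B) m with hPdef
        have hPcomp : IsComponent e P :=
          kr_psup_comp hC (fun j => kr_comp_Sinvk hS hC (j+1) hBc) m
        have hx : B ⊓ (Function.surjInv hS)^[m+1] B ≤ e := inf_le_left.trans hBc.2.1
        have hx0 : (0:E) ≤ B ⊓ (Function.surjInv hS)^[m+1] B :=
          le_inf hBc.1 (kr_comp_Sinvk hS hC (m+1) hBc).1
        have hrhs : B ⊓ partialSup (fun j => (Function.surjInv hS)^[j+1] B) (m+1)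
            = ym m ⊔ (B ⊓ (Function.surjInv hS)^[m+1] B) := by
          rw [kr_psup_succ, kr_inf_sup_left, ← hPdef, ← ih]
        rw [hrhs, show ym (m+1) = ym m ⊔ Bq (m+1) from rfl]
        have hle1 : Bq (m+1) ≤ B ⊓ (Function.surjInv hS)^[m+1] B :=
          le_inf (kr_qComp_le hS hC (m+1)) (kr_qComp_le_Sinvk hS hC (m+1))
        refine le_antisymm (sup_le_sup_left hle1 _) (sup_le le_sup_left ?_)
        have hsplit := kr_comp_split hPcomp hx hx0
        have hc1 : (B ⊓ (Function.surjInv hS)^[m+1] B) ⊓ P ≤ ym m := by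
          rw [ih]
          exact inf_le_inf_right P inf_le_left
        have hc2 : (B ⊓ (Function.surjInv hS)^[m+1] B) ⊓ (e - P) = Bq (m+1) := rfl
        calc B ⊓ (Function.surjInv hS)^[m+1] B
            = ((B ⊓ (Function.surjInv hS)^[m+1] B) ⊓ P)
                ⊔ ((B ⊓ (Function.surjInv hS)^[m+1] B) ⊓ (e - P)) := hsplit
        _ ≤ ym m ⊔ Bq (m+1) := by rw [hc2]; exact sup_le_sup_right hc1 _
    have hymB : ∀ m, ym m ≤ B := fun m => (h4 m).le.trans inf_le_left
    have hyB : y ≤ B := hymlub.2 (by rintro _ ⟨m, rfl⟩; exact hymB m)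
    -- step (5): B = y via Poincaré recurrence
    have hBy : B = y := by
      set z := B - y with hzdef
      have hz0 : 0 ≤ z := sub_nonneg.2 hyB
      have hzB : z ≤ B := sub_le_self B hycomp.1
      have hze : z ≤ e := hzB.trans hBc.2.1
      have hzy : z ⊓ y = 0 :=
        kr_disj_of_le_compl hycomp hz0 (sub_le_sub_right hBc.2.1 y)
      have hzSB : ∀ j : ℕ, z ⊓ (Function.surjInv hS)^[j+1] B = 0 := by
        intro j
        have h1 : B ⊓ (Function.surjInv hS)^[j+1] B ≤ y := by
          have h2 : (Function.surjInv hS)^[j+1] B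
              ≤ partialSup (fun j' => (Function.surjInv hS)^[j'+1] B) (j+1) :=
            kr_le_psup (fun j' => (Function.surjInv hS)^[j'+1] B) (Nat.lt_succ_self j)
          have h3 : B ⊓ (Function.surjInv hS)^[j+1] B ≤ ym (j+1) := by
            rw [h4 (j+1)]
            exact inf_le_inf_left B h2
          exact h3.trans (hymlub.1 ⟨j+1, rfl⟩)
        have h5 : z ⊓ (Function.surjInv hS)^[j+1] B ≤ z ⊓ y :=
          le_inf inf_le_left ((inf_le_inf_right _ hzB).trans h1)
        rw [hzy] at h5
        exact le_antisymm h5 (le_inf hz0 (kr_comp_Sinvk hS hC (j+1) hBc).1)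
      have hzknn : ∀ j : ℕ, (0:E) ≤ (Function.surjInv hS)^[j] z := by
        intro j
        have := kr_Sinvk_mono hS hC j hz0
        rwa [kr_Sinvk_zero hS hC] at this
      have hzz : ∀ j : ℕ, z ⊓ (Function.surjInv hS)^[j+1] z = 0 := by
        intro j
        refine le_antisymm ?_ (le_inf hz0 (hzknn (j+1)))
        calc z ⊓ (Function.surjInv hS)^[j+1] z ≤ z ⊓ (Function.surjInv hS)^[j+1] B :=
              inf_le_inf_left _ (kr_Sinvk_mono hS hC (j+1) hzB)
        _ = 0 := hzSB j
      have hpair : ∀ i j : ℕ, i ≠ j →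
          (Function.surjInv hS)^[i] z ⊓ (Function.surjInv hS)^[j] z = 0 := by
        have core : ∀ i j : ℕ, i < j →
            (Function.surjInv hS)^[i] z ⊓ (Function.surjInv hS)^[j] z = 0 := by
          intro i j hij
          have hj : j = i + ((j - i - 1) + 1) := by omega
          rw [hj, Function.iterate_add_apply, ← kr_Sinvk_inf hS hC i, hzz (j - i - 1),
            kr_Sinvk_zero hS hC]
        intro i j hij
        rcases lt_or_gt_of_ne hij with h | h
        · exact core i j h
        · rw [inf_comm]; exact core j i h
      have hTz : T z = 0 := by
        refine kr_archimedean (hC.T_pos z hz0) (b := e) ?_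
        intro m
        have hsum : T (partialSup (fun j => (Function.surjInv hS)^[j] z) m)
            = ∑ i ∈ Finset.range m, T ((Function.surjInv hS)^[i] z) :=
          kr_T_psup_sum hC hzknn (fun i _ j _ hij => hpair i j hij)
        have hterm : ∀ i : ℕ, T ((Function.surjInv hS)^[i] z) = T z :=
          fun i => kr_T_Sinvk hS hC i z
        have hsum2 : T (partialSup (fun j => (Function.surjInv hS)^[j] z) m) = m • T z := by
          rw [hsum]
          simp [hterm]
        have hle : partialSup (fun j => (Function.surjInv hS)^[j] z) m ≤ e := by
          refine kr_psup_le _ hC.unit.1.le ?_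
          intro i _
          have := kr_Sinvk_mono hS hC i hze
          rwa [kr_Sinvk_e hS hC] at this
        calc m • T z = T (partialSup (fun j => (Function.surjInv hS)^[j] z) m) := hsum2.symm
        _ ≤ T e := kr_T_mono hC hle
        _ = e := hC.Te
      exact sub_eq_zero.1 (hC.T_strictPos z hz0 hTz)
    -- step (6): S v ≤ v
    have hBv : B ≤ v := by
      rw [hBy]
      refine hymlub.2 ?_
      rintro _ ⟨m, rfl⟩
      have h1 : ym m ≤ Vm m := kr_psup_le_psup (fun k _ => kr_le_psup (fun j => (⇑S)^[j] (Bq (k+1))) (Nat.succ_pos k))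
      exact h1.trans (hVmlub.1 ⟨m, rfl⟩)
    have hv0 : (0:E) ≤ v := hvcomp.1
    have hSVm : ∀ m, S (Vm m) ≤ v := by
      intro m
      rw [hVmdef]
      rw [kr_map_psup ⇑S (map_zero S) hC.S_hom]
      refine kr_psup_le _ hv0 ?_
      intro k _
      rw [hTwdef]
      rw [kr_map_psup ⇑S (map_zero S) hC.S_hom]
      refine kr_psup_le _ hv0 ?_
      intro j hj
      have hrw : S ((⇑S)^[j] (Bq (k+1))) = (⇑S)^[j+1] (Bq (k+1)) :=
        (Function.iterate_succ_apply' (⇑S) j _).symm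
      rw [hrw]
      rcases Nat.lt_or_ge (j+1) (k+1) with hlt | hge
      · have h1 : (⇑S)^[j+1] (Bq (k+1)) ≤ Tw (k+1) := kr_le_psup (fun j' => (⇑S)^[j'] (Bq (k+1))) hlt
        have h2 : Tw (k+1) ≤ Vm (k+1) := kr_le_psup (fun k' => Tw (k'+1)) (Nat.lt_succ_self k)
        exact (h1.trans h2).trans (hVmlub.1 ⟨k+1, rfl⟩)
      · have hjk : j + 1 = k + 1 := by omega
        rw [hjk]
        have h1 : Bq (k+1) ≤ (Function.surjInv hS)^[k+1] B := kr_qComp_le_Sinvk hS hC (k+1)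
        have h2 := kr_Sk_mono hC (k+1) h1
        rw [kr_SkSinvk hS hC] at h2
        exact h2.trans hBv
    -- step (7): S v = v
    have hSlub : IsLUB (Set.range fun m => S (Vm m)) (S v) := kr_S_isLUB_range hS hC hVmlub
    have hSvle : S v ≤ v := hSlub.2 (by rintro _ ⟨m, rfl⟩; exact hSVm m)
    have hSv : S v = v := by
      have hT0 : T (v - S v) = 0 := by rw [map_sub, hC.TS, sub_self]
      have := hC.T_strictPos _ (sub_nonneg.2 hSvle) hT0
      exact (sub_eq_zero.1 this).symm
    -- step (8): v = e
    have hveq : v = e := by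
      have hccomp : IsComponent e (e - v) := kr_comp_compl hvcomp
      have hcfix : S (e - v) = e - v := by rw [map_sub, hC.Se, hSv]
      have hcB : (e - v) ⊓ B = 0 := by
        refine le_antisymm ?_ (le_inf hccomp.1 hBc.1)
        calc (e - v) ⊓ B ≤ (e - v) ⊓ v := inf_le_inf_left _ hBv
        _ = 0 := hvcomp.2.2
      have hc0 := hBmeet (e - v) hccomp hcfix hcB
      have := sub_eq_zero.1 hc0
      exact this.symm
    rw [← hveq]
    exact hVmlub
end Part6
private lemma kr_idx_lt {n i a k : ℕ} (hn : 0 < n) (hi : i < n) (ha : a < k / n) :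
    i + a * n < k := by
  have h1 : (a + 1) * n ≤ k := (Nat.le_div_iff_mul_le hn).1 ha
  have h2 : i + a * n < (a + 1) * n := by
    rw [Nat.add_one_mul]
    omega
  omega

private lemma kr_ut_lt {n k j : ℕ} (hn : 0 < n) (hj : j < k - n * (k / n)) :
    n * (k / n) + j < k := by
  have h2 : n * (k / n) ≤ k := by rw [Nat.mul_comm]; exact Nat.div_mul_le_self _ _
  generalize hA : n * (k / n) = A at *
  omega

private lemma kr_idx_mod {n i a : ℕ} (hi : i < n) : (i + a * n) % n = i := by
  rw [Nat.add_mul_mod_self_right]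
  exact Nat.mod_eq_of_lt hi

private lemma kr_ut_mod {n k j : ℕ} (hn : 0 < n) (hj : j < k - n * (k / n)) :
    (n * (k / n) + j) % n = j := by
  have hmod : k % n = k - n * (k / n) := by
    have := Nat.div_add_mod k n
    generalize hA : n * (k / n) = A at *
    have : k % n < n := Nat.mod_lt _ hn
    omega
  have hjn : j < n := by
    have : k % n < n := Nat.mod_lt _ hn
    omega
  rw [Nat.add_comm, Nat.add_mul_mod_self_left]
  exact Nat.mod_eq_of_lt hjn

private lemma kr_ut_ne_cov {n k j i a : ℕ} (hn : 0 < n) (hj : j < k - n * (k / n))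
    (hi : i < n) (ha : a < k / n) : ¬(n * (k / n) + j = i + a * n) := by
  intro hEq
  have h1 := kr_ut_mod hn hj
  have h2 : (i + a * n) % n = i := kr_idx_mod hi
  rw [hEq, h2] at h1
  subst h1
  have h3 : n * (k / n) = a * n := by omega
  have h4 : (k / n) * n = a * n := by rw [← h3, Nat.mul_comm]
  have h5 : k / n = a := Nat.eq_of_mul_eq_mul_right hn h4
  omega
/-- **Riesz space Kakutani–Rokhlin theorem (ε-bounded version).** -/
theorem kakutani_rokhlin_eps {E : Type*} [ConditionallyCompleteLattice E] [AddCommGroup E]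
    [Module ℝ E] [CovariantClass E E (· + ·) (· ≤ ·)] [PosSMulMono ℝ E]
    (T S : E →ₗ[ℝ] E) (e : E) (hCEPS : IsCEPS T S e)
    (hErg : {f : E | S f = f} = Set.range T)
    (hTuc : TUnivComplete T)
    (hS : Function.Surjective ⇑S)
    (hAp : IsAperiodic (Function.surjInv hS) e e)
    (n : ℕ) (hn : 1 ≤ n) (ε : ℝ) (hε : 0 < ε) :
    ∃ q : E, IsComponent e q ∧
      (∀ i j : ℕ, i < n → j < n → i ≠ j → (⇑S)^[i] q ⊓ (⇑S)^[j] q = 0) ∧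
      T (e - partialSup (fun i => (⇑S)^[i] q) n) ≤ ε • e := by
  classical
  have hn0 : 0 < n := hn
  have he0 : (0:E) ≤ e := hCEPS.unit.1.le
  -- choose K
  set K := max 1 (Nat.ceil ((n:ℝ)/ε)) with hKdef
  have hK1 : 1 ≤ K := le_max_left _ _
  have hKpos : (0:ℝ) < (K:ℝ) := by exact_mod_cast hK1
  have hKge : (n:ℝ)/ε ≤ (K:ℝ) := by
    have h1 : (n:ℝ)/ε ≤ (Nat.ceil ((n:ℝ)/ε) : ℝ) := Nat.le_ceil _
    have h2 : (Nat.ceil ((n:ℝ)/ε) : ℝ) ≤ (K:ℝ) := by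
      exact_mod_cast le_max_right 1 (Nat.ceil ((n:ℝ)/ε))
    linarith
  have hnK : (n:ℝ)/(K:ℝ) ≤ ε := by
    rw [div_le_iff₀ hKpos]
    have := (div_le_iff₀ hε).1 hKge
    linarith
  have hnKnn : (0:ℝ) ≤ (n:ℝ)/(K:ℝ) := by positivity
  obtain ⟨B, hBc, hB0, hfl⟩ := kr_kac hS hCEPS hAp K hK1
  set W : ℕ → E := fun k => qComp (Function.surjInv hS) e B k with hW
  have hWc : ∀ k, IsComponent e (W k) := fun k => kr_qComp_comp hS hCEPS hBc k
  have hW0 : ∀ k, 0 ≤ W k := fun k => (hWc k).1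
  have hWe : ∀ k, W k ≤ e := fun k => (hWc k).2.1
  have hWz : ∀ k, 1 ≤ k → k < K → W k = 0 := hB0
  have hfl' : IsLUB (Set.range fun m => partialSup
      (fun k => partialSup (fun j => (⇑S)^[j] (W (k+1))) (k+1)) m) e := by
    simp only [hW]; exact hfl
  have hfloor : ∀ {k m j i : ℕ}, 1 ≤ k → 1 ≤ m → j < k → i < m → ¬(k = m ∧ j = i) →
      (⇑S)^[j] (W k) ⊓ (⇑S)^[i] (W m) = 0 := by
    intro k m j i hk hm hjk him hne
    simp only [hW]
    exact kr_floor_disj hS hCEPS hBc hk hm hjk him hne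
  have hSW0 : ∀ j k, (0:E) ≤ (⇑S)^[j] (W k) := fun j k => (kr_comp_Sk hCEPS j (hWc k)).1
  have hSWe : ∀ j k, (⇑S)^[j] (W k) ≤ e := fun j k => (kr_comp_Sk hCEPS j (hWc k)).2.1
  -- the Rokhlin base q
  set Qt : ℕ → E := fun k => partialSup (fun a => (⇑S)^[a*n] (W k)) (k / n) with hQt
  set Qm : ℕ → E := fun m => partialSup (fun k => Qt (k+1)) m with hQm
  have hQtc : ∀ k, IsComponent e (Qt k) :=
    fun k => kr_psup_comp hCEPS (fun a => kr_comp_Sk hCEPS (a*n) (hWc k)) (k / n)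
  have hQmc : ∀ m, IsComponent e (Qm m) := fun m => kr_psup_comp hCEPS (fun k => hQtc (k+1)) m
  have hQlub : IsLUB (Set.range Qm) (sSup (Set.range Qm)) :=
    isLUB_csSup (Set.range_nonempty Qm) ⟨e, by rintro _ ⟨m, rfl⟩; exact (hQmc m).2.1⟩
  set q := sSup (Set.range Qm) with hq
  have hqcomp : IsComponent e q :=
    kr_comp_isLUB (by rintro _ ⟨m, rfl⟩; exact hQmc m) (Set.range_nonempty Qm) hQlub
  -- unfolding S^[i] (Qm m)
  have hSiQm : ∀ (i m : ℕ), (⇑S)^[i] (Qm m)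
      = partialSup (fun k => partialSup (fun a => (⇑S)^[i + a*n] (W (k+1))) ((k+1) / n)) m := by
    intro i m
    rw [hQm]
    rw [kr_map_psup ((⇑S)^[i]) (kr_Sk_zero hCEPS i) (kr_Sk_sup hCEPS i)]
    congr 1
    funext k
    rw [hQt]
    rw [kr_map_psup ((⇑S)^[i]) (kr_Sk_zero hCEPS i) (kr_Sk_sup hCEPS i)]
    congr 1
    funext a
    rw [← Function.iterate_add_apply]
  -- pairwise disjointness of the columns
  have hdisj : ∀ i j : ℕ, i < n → j < n → i ≠ j → (⇑S)^[i] q ⊓ (⇑S)^[j] q = 0 := by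
    intro i j hi hj hij
    have hlubi := kr_Sk_isLUB_range hS hCEPS i hQlub
    have hlubj := kr_Sk_isLUB_range hS hCEPS j hQlub
    refine kr_inf_isLUB_zero₂ hlubi hlubj
      (fun m => (kr_comp_Sk hCEPS i (hQmc m)).1) (fun m => (kr_comp_Sk hCEPS j (hQmc m)).1) ?_
    intro m m'
    rw [hSiQm i m, hSiQm j m']
    refine kr_psup_inf_psup_eq_zero
      (fun k => kr_psup_nonneg _ _) (fun k => kr_psup_nonneg _ _) ?_
    intro k _ k' _
    refine kr_psup_inf_psup_eq_zero (fun a => hSW0 _ _) (fun a => hSW0 _ _) ?_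
    intro a ha a' ha'
    refine hfloor (Nat.succ_pos k) (Nat.succ_pos k') (kr_idx_lt hn0 hi ha)
      (kr_idx_lt hn0 hj ha') ?_
    rintro ⟨-, hidx⟩
    exact hij (by rw [← kr_idx_mod (n := n) (a := a) hi, hidx, kr_idx_mod hj])
  -- covered and uncovered parts
  set Ct : ℕ → E := fun k => partialSup (fun j => (⇑S)^[j] (W k)) (n * (k / n)) with hCt
  set Ut : ℕ → E := fun k => partialSup (fun j => (⇑S)^[n * (k / n) + j] (W k)) (k - n * (k / n))
    with hUt
  set Cm : ℕ → E := fun m => partialSup (fun k => Ct (k+1)) m with hCm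
  set Um : ℕ → E := fun m => partialSup (fun k => Ut (k+1)) m with hUm
  have hsplit : ∀ k : ℕ, partialSup (fun j => (⇑S)^[j] (W k)) k = Ct k ⊔ Ut k := by
    intro k
    have ht : n * (k / n) ≤ k := by rw [Nat.mul_comm]; exact Nat.div_mul_le_self _ _
    have h := kr_psup_split (fun j => (⇑S)^[j] (W k)) (n * (k / n)) (k - n * (k / n))
    rw [Nat.add_sub_cancel' ht] at h
    rw [h, hCt, hUt]
  have hVCU : ∀ m : ℕ, partialSup (fun k => partialSup (fun j => (⇑S)^[j] (W (k+1))) (k+1)) m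
      = Cm m ⊔ Um m := by
    intro m
    have hfun : (fun k => partialSup (fun j => (⇑S)^[j] (W (k+1))) (k+1))
        = fun k => Ct (k+1) ⊔ Ut (k+1) := funext fun k => hsplit (k+1)
    rw [hfun, kr_psup_sup, hCm, hUm]
  have hUtc : ∀ k, IsComponent e (Ut k) :=
    fun k => kr_psup_comp hCEPS (fun j => kr_comp_Sk hCEPS _ (hWc k)) _
  have hCtc : ∀ k, IsComponent e (Ct k) :=
    fun k => kr_psup_comp hCEPS (fun j => kr_comp_Sk hCEPS _ (hWc k)) _
  have hUmc : ∀ m, IsComponent e (Um m) := fun m => kr_psup_comp hCEPS (fun k => hUtc (k+1)) m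
  have hCmc : ∀ m, IsComponent e (Cm m) := fun m => kr_psup_comp hCEPS (fun k => hCtc (k+1)) m
  have hUlub : IsLUB (Set.range Um) (sSup (Set.range Um)) :=
    isLUB_csSup (Set.range_nonempty Um) ⟨e, by rintro _ ⟨m, rfl⟩; exact (hUmc m).2.1⟩
  have hClub : IsLUB (Set.range Cm) (sSup (Set.range Cm)) :=
    isLUB_csSup (Set.range_nonempty Cm) ⟨e, by rintro _ ⟨m, rfl⟩; exact (hCmc m).2.1⟩
  set u := sSup (Set.range Um) with hu
  set cc := sSup (Set.range Cm) with hcc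
  have hucomp : IsComponent e u :=
    kr_comp_isLUB (by rintro _ ⟨m, rfl⟩; exact hUmc m) (Set.range_nonempty Um) hUlub
  have hccu_e : e = cc ⊔ u := by
    have h1 := kr_isLUB_sup hClub hUlub
    have h2 : (fun m => Cm m ⊔ Um m)
        = (fun m => partialSup (fun k => partialSup (fun j => (⇑S)^[j] (W (k+1))) (k+1)) m) :=
      funext fun m => (hVCU m).symm
    rw [h2] at h1
    exact hfl'.unique h1
  set CC := partialSup (fun i => (⇑S)^[i] q) n with hCC
  have hCCc : IsComponent e CC :=
    kr_psup_comp hCEPS (fun i => kr_comp_Sk hCEPS i hqcomp) n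
  -- cc ≤ CC
  have hccCC : cc ≤ CC := by
    refine hClub.2 ?_
    rintro _ ⟨m, rfl⟩
    rw [hCm]
    refine kr_psup_le _ hCCc.1 ?_
    intro k _
    rw [hCt]
    refine kr_psup_le _ hCCc.1 ?_
    intro jj hjj
    have hi : jj % n < n := Nat.mod_lt _ hn0
    have ha : jj / n < (k+1) / n := by
      rw [Nat.div_lt_iff_lt_mul hn0]
      rw [Nat.mul_comm]
      exact hjj
    have hjeq : jj % n + (jj / n) * n = jj := by
      rw [Nat.mul_comm]
      exact Nat.mod_add_div jj n
    have step1 : (⇑S)^[jj] (W (k+1)) = (⇑S)^[jj % n] ((⇑S)^[(jj / n) * n] (W (k+1))) := by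
      rw [← Function.iterate_add_apply, hjeq]
    rw [step1]
    have step2 : (⇑S)^[(jj / n) * n] (W (k+1)) ≤ Qt (k+1) := by
      rw [hQt]
      exact kr_le_psup (fun a => (⇑S)^[a*n] (W (k+1))) ha
    have step3 : Qt (k+1) ≤ q := by
      have h1 : Qt (k+1) ≤ Qm (k+1) := kr_le_psup (fun k' => Qt (k'+1)) (Nat.lt_succ_self k)
      exact h1.trans (hQlub.1 ⟨k+1, rfl⟩)
    have step4 : (⇑S)^[jj % n] ((⇑S)^[(jj / n) * n] (W (k+1))) ≤ (⇑S)^[jj % n] q :=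
      kr_Sk_mono hCEPS _ (step2.trans step3)
    exact step4.trans (kr_le_psup (fun i => (⇑S)^[i] q) hi)
  -- CC ⊓ u = 0
  have hCCu : CC ⊓ u = 0 := by
    refine kr_inf_isLUB_zero hUlub (Set.range_nonempty Um)
      (by rintro _ ⟨m, rfl⟩; exact (hUmc m).1) hCCc.1 ?_
    rintro _ ⟨m, rfl⟩
    rw [hCC]
    refine kr_psup_inf_eq_zero (hUmc m).1 ?_
    intro i hi
    have hlubi := kr_Sk_isLUB_range hS hCEPS i hQlub
    rw [inf_comm]
    have h0 : Um m ⊓ (⇑S)^[i] q = 0 := by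
      refine kr_inf_isLUB_zero hlubi (Set.range_nonempty _)
        (by rintro _ ⟨m', rfl⟩; exact (kr_comp_Sk hCEPS i (hQmc m')).1) (hUmc m).1 ?_
      rintro _ ⟨m', rfl⟩
      show Um m ⊓ (⇑S)^[i] (Qm m') = 0
      rw [hSiQm i m', hUm]
      refine kr_psup_inf_psup_eq_zero (fun k => kr_psup_nonneg _ _) (fun k => kr_psup_nonneg _ _) ?_
      intro k _ k' _
      rw [hUt]
      refine kr_psup_inf_psup_eq_zero (fun j => hSW0 _ _) (fun a => hSW0 _ _) ?_
      intro j hj a ha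
      refine hfloor (Nat.succ_pos k) (Nat.succ_pos k') (kr_ut_lt hn0 hj) (kr_idx_lt hn0 hi ha) ?_
      rintro ⟨hkk, hidx⟩
      have hkeq : k = k' := by omega
      subst hkeq
      exact kr_ut_ne_cov hn0 hj hi ha hidx
    exact h0
  -- e - CC = u
  have heCu : e - CC = u := by
    have h1 : CC ⊔ u = e := by
      refine le_antisymm (sup_le hCCc.2.1 hucomp.2.1) ?_
      rw [hccu_e]
      exact sup_le_sup_right hccCC u
    have h2 := inf_add_sup CC u
    rw [hCCu, h1, zero_add] at h2
    rw [h2]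
    abel
  -- full towers
  set Vt : ℕ → E := fun k => partialSup (fun j => (⇑S)^[j] (W k)) k with hVt
  have hVtc : ∀ k, IsComponent e (Vt k) :=
    fun k => kr_psup_comp hCEPS (fun j => kr_comp_Sk hCEPS _ (hWc k)) _
  have hVmc' : ∀ m, IsComponent e (partialSup (fun k => Vt (k+1)) m) :=
    fun m => kr_psup_comp hCEPS (fun k => hVtc (k+1)) m
  -- the quantitative estimate
  have hTUm : ∀ m : ℕ, T (Um m) ≤ ε • e := by
    intro m
    have hUtd : ∀ k, k < m → ∀ k', k' < m → k ≠ k' → Ut (k+1) ⊓ Ut (k'+1) = 0 := by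
      intro k _ k' _ hkk
      rw [hUt]
      refine kr_psup_inf_psup_eq_zero (fun j => hSW0 _ _) (fun j => hSW0 _ _) ?_
      intro j hj j' hj'
      refine hfloor (Nat.succ_pos k) (Nat.succ_pos k') (kr_ut_lt hn0 hj) (kr_ut_lt hn0 hj') ?_
      rintro ⟨hk, -⟩
      exact hkk (by omega)
    have hTUt : ∀ k : ℕ, T (Ut (k+1)) = ((k+1) - n * ((k+1) / n)) • T (W (k+1)) := by
      intro k
      rw [hUt]
      rw [kr_T_psup_sum hCEPS (fun j => hSW0 _ _) ?_]
      · have hterm : ∀ j : ℕ, T ((⇑S)^[n * ((k+1) / n) + j] (W (k+1))) = T (W (k+1)) :=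
          fun j => kr_T_Sk hCEPS _ _
        simp [hterm]
      · intro j hj j' hj' hjj
        refine hfloor (Nat.succ_pos k) (Nat.succ_pos k) (kr_ut_lt hn0 hj) (kr_ut_lt hn0 hj') ?_
        rintro ⟨-, hidx⟩
        exact hjj (by omega)
    have hVtd : ∀ k, k < m → ∀ k', k' < m → k ≠ k' → Vt (k+1) ⊓ Vt (k'+1) = 0 := by
      intro k _ k' _ hkk
      rw [hVt]
      refine kr_psup_inf_psup_eq_zero (fun j => hSW0 _ _) (fun j => hSW0 _ _) ?_
      intro j hj j' hj'
      exact hfloor (Nat.succ_pos k) (Nat.succ_pos k') hj hj' (by rintro ⟨hk, -⟩; exact hkk (by omega))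
    have hTVt : ∀ k : ℕ, T (Vt (k+1)) = (k+1) • T (W (k+1)) := by
      intro k
      rw [hVt]
      rw [kr_T_psup_sum hCEPS (fun j => hSW0 _ _) ?_]
      · have hterm : ∀ j : ℕ, T ((⇑S)^[j] (W (k+1))) = T (W (k+1)) :=
          fun j => kr_T_Sk hCEPS _ _
        simp [hterm]
      · intro j hj j' hj' hjj
        exact hfloor (Nat.succ_pos k) (Nat.succ_pos k) hj hj' (by tauto)
    have hTUmsum : T (Um m) = ∑ k ∈ Finset.range m, ((k+1) - n * ((k+1) / n)) • T (W (k+1)) := by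
      rw [hUm, kr_T_psup_sum hCEPS (fun k => (hUtc (k+1)).1) hUtd]
      exact Finset.sum_congr rfl (fun k _ => hTUt k)
    have hTVmsum : T (partialSup (fun k => Vt (k+1)) m)
        = ∑ k ∈ Finset.range m, (k+1) • T (W (k+1)) := by
      rw [kr_T_psup_sum hCEPS (fun k => (hVtc (k+1)).1) hVtd]
      exact Finset.sum_congr rfl (fun k _ => hTVt k)
    have hTW0 : ∀ k, (0:E) ≤ T (W k) := fun k => hCEPS.T_pos _ (hW0 k)
    have hterm_le : ∀ k, k < m → ((k+1) - n * ((k+1) / n)) • T (W (k+1))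
        ≤ ((n:ℝ)/(K:ℝ) * ((k:ℝ)+1)) • T (W (k+1)) := by
      intro k _
      rcases Nat.lt_or_ge (k+1) K with hlt | hge
      · have hz : W (k+1) = 0 := hWz (k+1) (Nat.succ_pos k) hlt
        rw [hz, map_zero, smul_zero, smul_zero]
      · have hcnt : ((k+1) - n * ((k+1) / n)) = (k+1) % n := by
          have := Nat.div_add_mod (k+1) n
          generalize n * ((k+1) / n) = A at *
          omega
        have hcast : (((k+1) - n * ((k+1) / n) : ℕ) : ℝ) ≤ (n:ℝ) := by
          rw [hcnt]
          exact_mod_cast (Nat.mod_lt _ hn0).le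
        have hscal : (((k+1) - n * ((k+1) / n) : ℕ) : ℝ) ≤ (n:ℝ)/(K:ℝ) * ((k:ℝ)+1) := by
          have h1 : (n:ℝ) = (n:ℝ)/(K:ℝ) * (K:ℝ) := by
            field_simp
          have h2 : (K:ℝ) ≤ (k:ℝ)+1 := by exact_mod_cast hge
          have h3 : (n:ℝ)/(K:ℝ) * (K:ℝ) ≤ (n:ℝ)/(K:ℝ) * ((k:ℝ)+1) :=
            mul_le_mul_of_nonneg_left h2 hnKnn
          linarith
        calc ((k+1) - n * ((k+1) / n)) • T (W (k+1))
            = ((((k+1) - n * ((k+1) / n) : ℕ) : ℝ)) • T (W (k+1)) :=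
              (Nat.cast_smul_eq_nsmul ℝ _ _).symm
        _ ≤ ((n:ℝ)/(K:ℝ) * ((k:ℝ)+1)) • T (W (k+1)) := kr_smul_scalar_mono hscal (hTW0 (k+1))
    have hsum_le : T (Um m) ≤ ((n:ℝ)/(K:ℝ)) • T (partialSup (fun k => Vt (k+1)) m) := by
      rw [hTUmsum, hTVmsum]
      calc ∑ k ∈ Finset.range m, ((k+1) - n * ((k+1) / n)) • T (W (k+1))
          ≤ ∑ k ∈ Finset.range m, ((n:ℝ)/(K:ℝ) * ((k:ℝ)+1)) • T (W (k+1)) :=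
            kr_sum_le_sum hterm_le
      _ = ((n:ℝ)/(K:ℝ)) • ∑ k ∈ Finset.range m, (k+1) • T (W (k+1)) := by
            rw [Finset.smul_sum]
            refine Finset.sum_congr rfl ?_
            intro k _
            rw [mul_smul]
            congr 1
            rw [← Nat.cast_smul_eq_nsmul ℝ (k+1) (T (W (k+1)))]
            push_cast
            ring_nf
    have hVme : T (partialSup (fun k => Vt (k+1)) m) ≤ e := by
      have h1 : partialSup (fun k => Vt (k+1)) m ≤ e := (hVmc' m).2.1
      calc T (partialSup (fun k => Vt (k+1)) m) ≤ T e := kr_T_mono hCEPS h1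
      _ = e := hCEPS.Te
    calc T (Um m) ≤ ((n:ℝ)/(K:ℝ)) • T (partialSup (fun k => Vt (k+1)) m) := hsum_le
    _ ≤ ((n:ℝ)/(K:ℝ)) • e := smul_le_smul_of_nonneg_left hVme hnKnn
    _ ≤ ε • e := kr_smul_scalar_mono hnK he0
  -- conclude
  have hUmono : Monotone Um := by
    intro a b hab
    rw [hUm]
    exact kr_psup_mono _ hab
  have hTulub : IsLUB (Set.range fun m => T (Um m)) (T u) := kr_T_isLUB hCEPS hUmono hUlub
  have hTu : T u ≤ ε • e := hTulub.2 (by rintro _ ⟨m, rfl⟩; exact hTUm m)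
  refine ⟨q, hqcomp, hdisj, ?_⟩
  have hrw : e - partialSup (fun i => (⇑S)^[i] q) n = u := heCu
  rw [hrw]
  exact hTu
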